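/- There exists a probability measure on {−1,1}³ whose coordinate random variables X, Y, Z satisfy E[X] = E[Y] = E[Z] = 0, E[XY] = 1/2, E[XZ] = −1/2, and E[YZ] = −1/2, even though these moment values violate Bell's original inequality 1 + E[YZ] ≥ |E[XY] − E[XZ]| (since 1/2 < 1). Hence Bell's original inequality is not necessary for the existence of a joint probability distribution of three ±1-valued random variables with zero means. -/
import Mathlib


/-- The sample space `{-1,1}³` with coordinates `X, Y, Z`. -/
abbrev SignTriple : Type := ({-1, 1} : Finset ℝ) × ({-1, 1} : Finset ℝ) × ({-1, 1} : Finset ℝ)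

lemma bell_univ_eq : (Finset.univ : Finset (({-1,1} : Finset ℝ) : Type)) =
    {⟨-1, by norm_num⟩, ⟨1, by norm_num⟩} := by
  ext x
  have := x.2
  simp only [Finset.mem_insert, Finset.mem_singleton] at this ⊢
  simp [Subtype.ext_iff]
  tauto

lemma bell_sum_two (g : ({-1,1} : Finset ℝ) → ℝ) :
    ∑ x, g x = g ⟨-1, by norm_num⟩ + g ⟨1, by norm_num⟩ := by
  rw [bell_univ_eq, Finset.sum_insert (by simp [Subtype.ext_iff]; norm_num),
    Finset.sum_singleton]

/-- The moment values `E[XY] = 1/2`, `E[XZ] = -1/2`, `E[YZ] = -1/2` violate Bell's original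
inequality `1 + E[YZ] ≥ |E[XY] - E[XZ]|`, yet a joint probability distribution on `{-1,1}³`
with zero means realizing these moments exists: Bell's original inequality is not necessary
for the existence of a joint distribution. -/
theorem bell_original_not_necessary :
    (1 + (-1/2 : ℝ) < |(1/2 : ℝ) - (-1/2)|) ∧
    ∃ p : SignTriple → ℝ,
      (∀ s, 0 ≤ p s) ∧ (∑ s, p s = 1) ∧
      (∑ s, p s * (s.1 : ℝ)) = 0 ∧
      (∑ s, p s * (s.2.1 : ℝ)) = 0 ∧
      (∑ s, p s * (s.2.2 : ℝ)) = 0 ∧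
      (∑ s, p s * ((s.1 : ℝ) * (s.2.1 : ℝ))) = 1/2 ∧
      (∑ s, p s * ((s.2.1 : ℝ) * (s.2.2 : ℝ))) = -1/2 ∧
      (∑ s, p s * ((s.1 : ℝ) * (s.2.2 : ℝ))) = -1/2 := by
  constructor
  · rw [abs_of_pos (by norm_num)]; norm_num
  · refine ⟨fun s => (1 + ((s.1 : ℝ) * s.2.1 - (s.2.1 : ℝ) * s.2.2 - (s.1 : ℝ) * s.2.2) / 2) / 8,
      ?_, ?_, ?_, ?_, ?_, ?_, ?_, ?_⟩
    · rintro ⟨x, y, z⟩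
      have hx := x.2; have hy := y.2; have hz := z.2
      simp only [Finset.mem_insert, Finset.mem_singleton] at hx hy hz
      rcases hx with hx | hx <;> rcases hy with hy | hy <;> rcases hz with hz | hz <;>
        simp only [hx, hy, hz] <;> norm_num
    all_goals
      simp_rw [Fintype.sum_prod_type, bell_sum_two]
      norm_num
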